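/- Let a = [w_1, …, w_m] be a sentence of m words over an alphabet S such that none of the words is closed, every edge of G_a is traversed at least twice by the sentence, and for every i there exists j ≠ i such that w_i and w_j share an edge. If equality wt(a) = ∑_{i=1}^m l(w_i)/2 holds, then: (a) every edge of G_a is traversed exactly twice by the sentence; (b) m is even and G_a has exactly m/2 connected components, each of which is a tree; and (c) for every i there is a unique j ≠ i such that w_i and w_j share an edge, and each connected component of G_a contains the supports of exactly two of the words. -/

import Mathlib

open Finset

/-- The list of (undirected) edges traversed by a word, i.e. the unordered pairs of
consecutive letters. -/
def wordSteps {S : Type*} (L : List S) : List (Sym2 S) :=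
  L.zipWith (fun a b => s(a, b)) L.tail

/-- The support of the sentence `a = [w_1,…,w_m]`: the set of letters appearing in it. -/
def sentenceSupp {S : Type*} [DecidableEq S] {m : ℕ} (w : Fin m → List S) : Finset S :=
  Finset.univ.biUnion fun i => (w i).toFinset

/-- The graph `G_a` of a sentence `a = [w_1,…,w_m]`, with vertex set `supp(a)` and edge
set the union of the edge sets of the graphs `G_{w_i}` of its words. -/
def sentenceGraph {S : Type*} [DecidableEq S] {m : ℕ} (w : Fin m → List S) :
    SimpleGraph {x : S // x ∈ sentenceSupp w} :=
  SimpleGraph.fromRel fun u v => ∃ i, s((u : S), (v : S)) ∈ wordSteps (w i)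

section AuxGraph

open SimpleGraph

lemma aux_cycle_edges_nonempty {V : Type*} {G : SimpleGraph V} {v : V} {p : G.Walk v v}
    (hp : p.IsCycle) : p.edges ≠ [] := by
  intro h
  have h3 := hp.three_le_length
  have : p.length = 0 := by
    have := p.length_edges; rw [h] at this; simpa using this.symm
  omega

/-- A finite connected graph has at least `#V - 1` edges; in case of equality it is a tree. -/
lemma aux_conn_card :
    ∀ (n : ℕ) {V : Type*} [Finite V] (G : SimpleGraph V),
      G.Connected → G.edgeSet.ncard = n →
      Nat.card V ≤ n + 1 ∧ (Nat.card V = n + 1 → G.IsTree) := by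
  intro n
  induction n using Nat.strong_induction_on with
  | _ n IH =>
    intro V _ G hconn hE
    by_cases hac : G.IsAcyclic
    · have htree : G.IsTree := ⟨hconn, hac⟩
      haveI : Fintype V := Fintype.ofFinite V
      haveI : Fintype G.edgeSet := Fintype.ofFinite _
      have hc := htree.card_edgeFinset
      have hn : G.edgeSet.ncard = G.edgeFinset.card := by
        rw [Set.ncard_eq_toFinset_card']; rfl
      rw [hn] at hE
      rw [Nat.card_eq_fintype_card]
      exact ⟨by omega, fun _ => htree⟩
    · unfold IsAcyclic at hac; push_neg at hac
      obtain ⟨v, p, hp⟩ := hac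
      obtain ⟨e, he⟩ : ∃ e, e ∈ p.edges := by
        cases h : p.edges with
        | nil => exact absurd h (aux_cycle_edges_nonempty hp)
        | cons a l => exact ⟨a, h ▸ (List.mem_cons_self : a ∈ a :: l)⟩
      induction e with
      | _ a b =>
      have heG : s(a, b) ∈ G.edgeSet := p.edges_subset_edgeSet he
      have hnb : ¬ G.IsBridge s(a, b) := by
        rw [isBridge_iff_mem_and_forall_cycle_notMem]
        push_neg
        exact ⟨v, p, hp, he⟩
        exact heG
      have hreach : (G \ fromEdgeSet {s(a, b)}).Reachable a b := by
        rw [isBridge_iff] at hnb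
        push_neg at hnb
        exact hnb
      set G' := G \ fromEdgeSet {s(a, b)} with hG'
      have hE' : G'.edgeSet = G.edgeSet \ {s(a, b)} := by
        simp [hG', edgeSet_sdiff, edgeSet_fromEdgeSet, edgeSet_sdiff_sdiff_isDiag]
      have hpre : G'.Connected := by
        rw [connected_iff]
        refine ⟨fun x y => ?_, hconn.nonempty⟩
        obtain ⟨q⟩ := hconn.preconnected x y
        induction q with
        | nil => exact Reachable.refl _
        | @cons u v' w h q ih =>
          refine Reachable.trans ?_ ih
          by_cases hcase : s(u, v') = s(a, b)
          · rw [Sym2.eq_iff] at hcase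
            rcases hcase with ⟨rfl, rfl⟩ | ⟨rfl, rfl⟩
            · exact hreach
            · exact hreach.symm
          · refine Adj.reachable ?_
            rw [hG', sdiff_adj]
            exact ⟨h, by simp [fromEdgeSet_adj, hcase]⟩
      have hfin : G.edgeSet.Finite := Set.toFinite _
      have hn1 : 1 ≤ n := by
        rw [← hE]
        exact (Set.ncard_pos hfin).mpr ⟨_, heG⟩
      have hEc : G'.edgeSet.ncard = n - 1 := by
        rw [hE', Set.ncard_diff_singleton_of_mem heG, hE]
      obtain ⟨h1, _⟩ := IH (n-1) (by omega) G' hpre hEc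
      exact ⟨by omega, fun hcard => by omega⟩

/-- A walk whose support lies in `s` gives reachability in the induced graph. -/
lemma aux_induce_reachable {V : Type*} {G : SimpleGraph V} {s : Set V} :
    ∀ {x y : V} (p : G.Walk x y) (hp : ∀ v ∈ p.support, v ∈ s),
      (G.induce s).Reachable ⟨x, hp x p.start_mem_support⟩ ⟨y, hp y p.end_mem_support⟩
  | x, _, SimpleGraph.Walk.nil, hp => Reachable.refl _
  | x, y, SimpleGraph.Walk.cons (v := b) h q, hp => by
      have hq : ∀ v ∈ q.support, v ∈ s := fun v hv =>
        hp v (by rw [SimpleGraph.Walk.support_cons]; exact List.mem_cons_of_mem _ hv)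
      have hadj : (G.induce s).Adj ⟨x, hp x (SimpleGraph.Walk.cons h q).start_mem_support⟩
          ⟨b, hq b q.start_mem_support⟩ := h
      exact hadj.reachable.trans (aux_induce_reachable q hq)

end AuxGraph

section AuxWord

variable {S : Type*} [DecidableEq S] {m : ℕ} {w : Fin m → List S}

lemma wordSteps_cons_cons (a b : S) (l : List S) :
    wordSteps (a :: b :: l) = s(a, b) :: wordSteps (b :: l) := rfl

lemma mem_of_mem_wordSteps : ∀ {L : List S} {e : Sym2 S}, e ∈ wordSteps L → ∀ x ∈ e, x ∈ L
  | [], e, he => by simp [wordSteps] at he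
  | [a], e, he => by simp [wordSteps] at he
  | a :: b :: l, e, he => by
      rw [wordSteps_cons_cons] at he
      rcases List.mem_cons.mp he with rfl | he'
      · intro x hx
        rcases Sym2.mem_iff.mp hx with rfl | rfl
        · exact List.mem_cons_self
        · exact List.mem_cons_of_mem _ (List.mem_cons_self)
      · intro x hx
        exact List.mem_cons_of_mem _ (mem_of_mem_wordSteps he' x hx)

lemma length_wordSteps (L : List S) : (wordSteps L).length = L.length - 1 := by
  simp [wordSteps]

lemma two_le_length_of_not_closed {L : List S} (h : L.head? ≠ L.getLast?) : 2 ≤ L.length := by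
  match L with
  | [] => simp at h
  | [a] => simp at h
  | a :: b :: l => simp

lemma mem_sentenceSupp {i : Fin m} {x : S} (hx : x ∈ w i) : x ∈ sentenceSupp w :=
  Finset.mem_biUnion.mpr ⟨i, Finset.mem_univ i, List.mem_toFinset.mpr hx⟩

lemma sentence_adj {i : Fin m} {x y : S} (hxy : s(x, y) ∈ wordSteps (w i)) (hne : x ≠ y)
    (hx : x ∈ sentenceSupp w) (hy : y ∈ sentenceSupp w) :
    (sentenceGraph w).Adj ⟨x, hx⟩ ⟨y, hy⟩ := by
  rw [sentenceGraph, SimpleGraph.fromRel_adj]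
  exact ⟨fun h => hne (congrArg Subtype.val h), Or.inl ⟨i, hxy⟩⟩

lemma list_reachable :
    ∀ (L : List S) (_ : ∀ e ∈ wordSteps L, ∃ i, e ∈ wordSteps (w i))
      (hmem : ∀ x ∈ L, x ∈ sentenceSupp w)
      (x y : S) (hx : x ∈ L) (hy : y ∈ L),
      (sentenceGraph w).Reachable ⟨x, hmem x hx⟩ ⟨y, hmem y hy⟩
  | [], _, _, x, y, hx, hy => absurd hx List.not_mem_nil
  | [a], hst, hmem, x, y, hx, hy => by
      have hxa : x = a := by simpa using hx
      have hya : y = a := by simpa using hy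
      subst hxa; subst hya
      exact SimpleGraph.Reachable.refl _
  | a :: b :: l, hst, hmem, x, y, hx, hy => by
      have hst' : ∀ e ∈ wordSteps (b :: l), ∃ i, e ∈ wordSteps (w i) := fun e he =>
        hst e (by rw [wordSteps_cons_cons]; exact List.mem_cons_of_mem _ he)
      have hmem' : ∀ z ∈ b :: l, z ∈ sentenceSupp w := fun z hz =>
        hmem z (List.mem_cons_of_mem _ hz)
      have hab : (sentenceGraph w).Reachable ⟨a, hmem a (List.mem_cons_self)⟩
          ⟨b, hmem' b (List.mem_cons_self)⟩ := by
        by_cases hne : a = b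
        · subst hne; exact SimpleGraph.Reachable.refl _
        · obtain ⟨i, hi⟩ := hst s(a, b)
            (by rw [wordSteps_cons_cons]; exact List.mem_cons_self)
          exact (sentence_adj hi hne _ _).reachable
      rcases List.mem_cons.mp hx with rfl | hx' <;> rcases List.mem_cons.mp hy with h | hy'
      · subst h; exact SimpleGraph.Reachable.refl _
      · exact hab.trans (list_reachable (b :: l) hst' hmem' b y (List.mem_cons_self) hy')
      · subst h
        exact (hab.trans
          (list_reachable (b :: l) hst' hmem' b x (List.mem_cons_self) hx')).symm
      · exact list_reachable (b :: l) hst' hmem' x y hx' hy'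

end AuxWord

/-- equality case of the CLT sentence lemma.  Let `a = [w_1,…,w_m]`
be a sentence in which no word is closed, every edge of `G_a` is traversed at least
twice, and every word shares an edge with some other word.  If
`wt(a) = ∑_i l(w_i)/2`, then: (a) every edge of `G_a` is traversed exactly twice;
(b) `m` is even and `G_a` has exactly `m/2` connected components, each a tree;
(c) each word shares an edge with a unique other word, and each connected component
of `G_a` contains the supports of exactly two of the words. -/
theorem sentence_weight_equality_case
    {S : Type*} [DecidableEq S] (m : ℕ) (w : Fin m → List S)
    (hclosed : ∀ i, (w i).head? ≠ (w i).getLast?)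
    (htwice : ∀ e : Sym2 S, (∃ i, e ∈ wordSteps (w i)) →
      2 ≤ ∑ i, (wordSteps (w i)).count e)
    (hshare : ∀ i, ∃ j, j ≠ i ∧ ∃ e, e ∈ wordSteps (w i) ∧ e ∈ wordSteps (w j))
    (heq : ((sentenceSupp w).card : ℝ) = ∑ i, ((w i).length : ℝ) / 2) :
    (∀ e : Sym2 S, (∃ i, e ∈ wordSteps (w i)) →
        (∑ i, (wordSteps (w i)).count e) = 2) ∧
    (Even m ∧ 2 * Nat.card (sentenceGraph w).ConnectedComponent = m ∧
      ∀ c : (sentenceGraph w).ConnectedComponent,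
        ((sentenceGraph w).induce c.supp).IsTree) ∧
    ((∀ i, ∃! j, j ≠ i ∧ ∃ e, e ∈ wordSteps (w i) ∧ e ∈ wordSteps (w j)) ∧
      ∀ c : (sentenceGraph w).ConnectedComponent,
        ∃ i j : Fin m, i ≠ j ∧ ∀ k : Fin m,
          ((∀ v : {x : S // x ∈ sentenceSupp w}, (v : S) ∈ w k → v ∈ c.supp)
            ↔ (k = i ∨ k = j))) := by
  classical
  set G := sentenceGraph w with hGdef
  -- basic word facts
  have hlen : ∀ i, 2 ≤ (w i).length := fun i => two_le_length_of_not_closed (hclosed i)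
  have hwne : ∀ i, w i ≠ [] := fun i h => by
    have := hlen i; rw [h] at this; simp at this
  -- numeric hypothesis
  have h2V : (sentenceSupp w).card * 2 = ∑ i, (w i).length := by
    have h := heq
    rw [← Finset.sum_div, eq_div_iff (two_ne_zero)] at h
    exact_mod_cast h
  -- the component of each word
  set f : Fin m → G.ConnectedComponent := fun i =>
    G.connectedComponentMk ⟨(w i).head (hwne i), mem_sentenceSupp (List.head_mem (hwne i))⟩
    with hfdef
  have hfx : ∀ (i : Fin m) {x : S} (hx : x ∈ w i),
      G.connectedComponentMk ⟨x, mem_sentenceSupp hx⟩ = f i := by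
    intro i x hx
    rw [hfdef]
    exact SimpleGraph.ConnectedComponent.sound
      (list_reachable (w i) (fun e he => ⟨i, he⟩) (fun z hz => mem_sentenceSupp hz)
        x _ hx (List.head_mem _))
  haveI : Fintype G.ConnectedComponent := Fintype.ofFinite _
  haveI : Fintype G.edgeSet := Fintype.ofFinite _
  -- the set of steps
  set F : Finset (Sym2 S) := Finset.univ.biUnion (fun i => (wordSteps (w i)).toFinset) with hFdef
  have hmemF : ∀ e : Sym2 S, e ∈ F ↔ ∃ i, e ∈ wordSteps (w i) := by
    intro e; simp [hFdef]
  -- total step count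
  have hstepsum : ∑ e ∈ F, (∑ i, (wordSteps (w i)).count e) + m = ∑ i, (w i).length := by
    rw [Finset.sum_comm]
    have hrow : ∀ i : Fin m, ∑ e ∈ F, (wordSteps (w i)).count e = (w i).length - 1 := by
      intro i
      rw [← length_wordSteps, ← List.sum_toFinset_count_eq_length]
      refine (Finset.sum_subset ?_ ?_).symm
      · intro e he; rw [hmemF]; exact ⟨i, List.mem_toFinset.mp he⟩
      · intro e _ he; exact List.count_eq_zero.mpr (fun h => he (List.mem_toFinset.mpr h))
    rw [Finset.sum_congr rfl (fun i _ => hrow i)]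
    have h1 : ∑ i : Fin m, ((w i).length - 1 + 1) = ∑ i : Fin m, (w i).length :=
      Finset.sum_congr rfl fun i _ => by have := hlen i; omega
    rw [Finset.sum_add_distrib] at h1
    simpa using h1
  -- split into diagonal and non-diagonal steps
  have hsplit : ∑ e ∈ F, (∑ i, (wordSteps (w i)).count e) =
      ∑ e ∈ F.filter (fun e => e.IsDiag), (∑ i, (wordSteps (w i)).count e)
      + ∑ e ∈ F.filter (fun e => ¬ e.IsDiag), (∑ i, (wordSteps (w i)).count e) :=
    (Finset.sum_filter_add_sum_filter_not F _ _).symm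
  -- the non-diagonal steps biject with the edges of G
  have hFnE : G.edgeFinset.card = (F.filter (fun e => ¬ e.IsDiag)).card := by
    refine Finset.card_bij (fun e _ => Sym2.map Subtype.val e) ?_ ?_ ?_
    · intro e he
      rw [SimpleGraph.mem_edgeFinset] at he
      induction e with
      | _ u v =>
        rw [SimpleGraph.mem_edgeSet, hGdef, sentenceGraph, SimpleGraph.fromRel_adj] at he
        obtain ⟨hne, hor⟩ := he
        rw [Sym2.map_pair_eq, Finset.mem_filter]
        constructor
        · rw [hmemF]
          rcases hor with ⟨i, hi⟩ | ⟨i, hi⟩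
          · exact ⟨i, hi⟩
          · exact ⟨i, by rwa [Sym2.eq_swap] at hi⟩
        · rw [Sym2.mk_isDiag_iff]
          exact fun h => hne (Subtype.ext h)
    · intro e₁ _ e₂ _ h
      exact Sym2.map.injective Subtype.val_injective h
    · intro e he
      rw [Finset.mem_filter] at he
      obtain ⟨heF, hnd⟩ := he
      induction e with
      | _ x y =>
        rw [Sym2.mk_isDiag_iff] at hnd
        obtain ⟨i, hi⟩ := (hmemF _).mp heF
        have hx : x ∈ w i := mem_of_mem_wordSteps hi x (Sym2.mem_iff.mpr (Or.inl rfl))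
        have hy : y ∈ w i := mem_of_mem_wordSteps hi y (Sym2.mem_iff.mpr (Or.inr rfl))
        refine ⟨s(⟨x, mem_sentenceSupp hx⟩, ⟨y, mem_sentenceSupp hy⟩), ?_, ?_⟩
        · rw [SimpleGraph.mem_edgeFinset, SimpleGraph.mem_edgeSet]
          exact sentence_adj hi hnd _ _
        · rw [Sym2.map_pair_eq]
  -- every non-diagonal step class has multiplicity ≥ 2, so 2·E ≤ their total
  have h2E : 2 * G.edgeFinset.card ≤
      ∑ e ∈ F.filter (fun e => ¬ e.IsDiag), (∑ i, (wordSteps (w i)).count e) := by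
    rw [hFnE]
    have := Finset.card_nsmul_le_sum (F.filter (fun e => ¬ e.IsDiag))
      (fun e => ∑ i, (wordSteps (w i)).count e) 2
      (fun e he => htwice e ((hmemF e).mp (Finset.mem_filter.mp he).1))
    simpa [smul_eq_mul, mul_comm] using this
  -- vertex partition by components
  have hVsum : (sentenceSupp w).card = ∑ c : G.ConnectedComponent, Nat.card c.supp := by
    rw [← Fintype.card_coe (sentenceSupp w), ← Finset.card_univ,
      Finset.card_eq_sum_card_fiberwise
        (f := G.connectedComponentMk) (t := Finset.univ) (fun x _ => Finset.mem_univ _)]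
    refine Finset.sum_congr rfl fun c _ => ?_
    have hts : c.supp.toFinset =
        Finset.univ.filter (fun v => G.connectedComponentMk v = c) := by
      ext v; simp [SimpleGraph.ConnectedComponent.mem_supp_iff]
    rw [Nat.card_coe_set_eq, Set.ncard_eq_toFinset_card', hts]
  -- edge component map
  have hmk_edge : ∀ e ∈ G.edgeFinset, ∀ x ∈ e, ∀ y ∈ e,
      G.connectedComponentMk x = G.connectedComponentMk y := by
    intro e he
    rw [SimpleGraph.mem_edgeFinset] at he
    induction e with
    | _ u v =>
      rw [SimpleGraph.mem_edgeSet] at he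
      intro x hx y hy
      rcases Sym2.mem_iff.mp hx with rfl | rfl <;> rcases Sym2.mem_iff.mp hy with rfl | rfl
      · rfl
      · exact SimpleGraph.ConnectedComponent.sound he.reachable
      · exact (SimpleGraph.ConnectedComponent.sound he.reachable).symm
      · rfl
  -- edge partition by components
  have hEsum : G.edgeFinset.card =
      ∑ c : G.ConnectedComponent, (G.induce c.supp).edgeSet.ncard := by
    rw [Finset.card_eq_sum_card_fiberwise
      (f := fun e => G.connectedComponentMk e.out.1) (t := Finset.univ)
      (fun x _ => Finset.mem_univ _)]
    refine Finset.sum_congr rfl fun c _ => ?_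
    haveI : Fintype (G.induce c.supp).edgeSet := Fintype.ofFinite _
    rw [Set.ncard_eq_toFinset_card']
    refine (Finset.card_bij (fun e _ => Sym2.map Subtype.val e) ?_ ?_ ?_).symm
    · intro e' he'
      rw [Set.mem_toFinset] at he'
      induction e' with
      | _ u v =>
        have hadj : G.Adj u.1 v.1 := (SimpleGraph.mem_edgeSet _).mp he'
        have hmem : Sym2.map Subtype.val s(u, v) ∈ G.edgeFinset := by
          rw [Sym2.map_pair_eq, SimpleGraph.mem_edgeFinset, SimpleGraph.mem_edgeSet]
          exact hadj
        rw [Finset.mem_filter]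
        refine ⟨hmem, ?_⟩
        have h1 : G.connectedComponentMk (Sym2.map Subtype.val s(u, v)).out.1
            = G.connectedComponentMk u.1 := by
          refine hmk_edge _ hmem _ (Sym2.out_fst_mem _) _ ?_
          rw [Sym2.map_pair_eq]
          exact Sym2.mem_iff.mpr (Or.inl rfl)
        rw [h1]
        exact (SimpleGraph.ConnectedComponent.mem_supp_iff c u.1).mp u.2
    · intro e₁ _ e₂ _ h
      exact Sym2.map.injective Subtype.val_injective h
    · intro e he
      rw [Finset.mem_filter] at he
      obtain ⟨heE, hc⟩ := he
      induction e with
      | _ x y =>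
        have hadj : G.Adj x y := by
          rw [← SimpleGraph.mem_edgeSet, ← SimpleGraph.mem_edgeFinset]; exact heE
        have hxc : x ∈ c.supp := by
          rw [SimpleGraph.ConnectedComponent.mem_supp_iff, ← hc]
          exact hmk_edge _ heE _ (Sym2.mem_iff.mpr (Or.inl rfl)) _ (Sym2.out_fst_mem _)
        have hyc : y ∈ c.supp := by
          rw [SimpleGraph.ConnectedComponent.mem_supp_iff, ← hc]
          exact hmk_edge _ heE _ (Sym2.mem_iff.mpr (Or.inr rfl)) _ (Sym2.out_fst_mem _)
        refine ⟨s(⟨x, hxc⟩, ⟨y, hyc⟩), ?_, ?_⟩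
        · rw [Set.mem_toFinset, SimpleGraph.mem_edgeSet]
          exact hadj
        · rw [Sym2.map_pair_eq]
  -- each component's induced graph is connected
  have hconn_c : ∀ c : G.ConnectedComponent, (G.induce c.supp).Connected := by
    intro c
    obtain ⟨v0, hv0⟩ := c.exists_rep
    rw [SimpleGraph.connected_iff]
    refine ⟨?_, ⟨⟨v0, (SimpleGraph.ConnectedComponent.mem_supp_iff c v0).mpr hv0⟩⟩⟩
    rintro ⟨x, hx⟩ ⟨y, hy⟩
    rw [SimpleGraph.ConnectedComponent.mem_supp_iff] at hx hy
    obtain ⟨p⟩ : G.Reachable x y := SimpleGraph.ConnectedComponent.eq.mp (hx.trans hy.symm)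
    have hsupp : ∀ v ∈ p.support, v ∈ c.supp := by
      intro v hv
      rw [SimpleGraph.ConnectedComponent.mem_supp_iff]
      exact ((SimpleGraph.ConnectedComponent.sound ⟨p.takeUntil v hv⟩).symm).trans hx
    exact aux_induce_reachable p hsupp
  -- per-component count
  have hVEc := fun c : G.ConnectedComponent =>
    aux_conn_card ((G.induce c.supp).edgeSet.ncard) _ (hconn_c c) rfl
  have hVle : ∑ c : G.ConnectedComponent, Nat.card c.supp ≤
      (∑ c : G.ConnectedComponent, (G.induce c.supp).edgeSet.ncard)
        + Fintype.card G.ConnectedComponent := by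
    calc ∑ c : G.ConnectedComponent, Nat.card c.supp
        ≤ ∑ c : G.ConnectedComponent, ((G.induce c.supp).edgeSet.ncard + 1) :=
          Finset.sum_le_sum fun c _ => (hVEc c).1
      _ = _ := by rw [Finset.sum_add_distrib]; simp
  -- fibers of f
  have hfsurj : ∀ c : G.ConnectedComponent, ∃ i, f i = c := by
    intro c
    obtain ⟨v0, hv0⟩ := c.exists_rep
    obtain ⟨i, hi⟩ : ∃ i, (v0 : S) ∈ w i := by
      have h := v0.2; simp only [sentenceSupp, Finset.mem_biUnion, Finset.mem_univ,
        true_and, List.mem_toFinset] at h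
      exact h
    exact ⟨i, (hfx i hi).symm.trans hv0⟩
  have hfib2 : ∀ c : G.ConnectedComponent,
      2 ≤ (Finset.univ.filter (fun i => f i = c)).card := by
    intro c
    obtain ⟨i, hi⟩ := hfsurj c
    obtain ⟨j, hji, e, hei, hej⟩ := hshare i
    have hzi : e.out.1 ∈ w i := mem_of_mem_wordSteps hei _ (Sym2.out_fst_mem e)
    have hzj : e.out.1 ∈ w j := mem_of_mem_wordSteps hej _ (Sym2.out_fst_mem e)
    have hfj : f j = f i := (hfx j hzj).symm.trans (hfx i hzi)
    rw [show (2 : ℕ) = 1 + 1 from rfl]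
    rw [Nat.add_one_le_iff, Finset.one_lt_card]
    exact ⟨j, by simp [hfj, hi], i, by simp [hi], hji⟩
  have hm_fib : m = ∑ c : G.ConnectedComponent,
      (Finset.univ.filter (fun i => f i = c)).card := by
    have h := Finset.card_eq_sum_card_fiberwise
      (f := f) (s := Finset.univ) (t := Finset.univ) (fun x _ => Finset.mem_univ _)
    simpa using h
  have h2C : 2 * Fintype.card G.ConnectedComponent ≤ m := by
    have h1 : ∑ _c : G.ConnectedComponent, (2 : ℕ) ≤
        ∑ c : G.ConnectedComponent, (Finset.univ.filter (fun i => f i = c)).card :=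
      Finset.sum_le_sum fun c _ => hfib2 c
    have h2 : ∑ _c : G.ConnectedComponent, (2 : ℕ)
        = 2 * Fintype.card G.ConnectedComponent := by
      rw [Finset.sum_const, Finset.card_univ, smul_eq_mul, mul_comm]
    omega
  -- the grand arithmetic
  have key : (∑ e ∈ F.filter (fun e => e.IsDiag), (∑ i, (wordSteps (w i)).count e)) = 0 ∧
      (∑ e ∈ F.filter (fun e => ¬ e.IsDiag), (∑ i, (wordSteps (w i)).count e))
        = 2 * G.edgeFinset.card ∧
      (∑ c : G.ConnectedComponent, Nat.card c.supp)
        = (∑ c : G.ConnectedComponent, (G.induce c.supp).edgeSet.ncard)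
          + Fintype.card G.ConnectedComponent ∧
      2 * Fintype.card G.ConnectedComponent = m ∧
      G.edgeFinset.card = ∑ c : G.ConnectedComponent, (G.induce c.supp).edgeSet.ncard := by
    refine ⟨?_, ?_, ?_, ?_, hEsum⟩ <;> omega
  obtain ⟨hD0, hSN, hVEeq, hCm, -⟩ := key
  -- pointwise equalities
  have hNpt : ∀ e ∈ F.filter (fun e => ¬ e.IsDiag), (∑ i, (wordSteps (w i)).count e) = 2 := by
    have h := (Finset.sum_eq_sum_iff_of_le
      (f := fun _ => 2) (g := fun e => ∑ i, (wordSteps (w i)).count e)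
      (s := F.filter (fun e => ¬ e.IsDiag))
      (fun e he => htwice e ((hmemF e).mp (Finset.mem_filter.mp he).1))).mp
    have hs : ∑ _e ∈ F.filter (fun e => ¬ e.IsDiag), 2
        = ∑ e ∈ F.filter (fun e => ¬ e.IsDiag), (∑ i, (wordSteps (w i)).count e) := by
      rw [hSN, hFnE, Finset.sum_const, smul_eq_mul, mul_comm]
    intro e he
    exact ((h hs) e he).symm
  have hVpt : ∀ c : G.ConnectedComponent,
      Nat.card c.supp = (G.induce c.supp).edgeSet.ncard + 1 := by
    have h := (Finset.sum_eq_sum_iff_of_le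
      (f := fun c : G.ConnectedComponent => Nat.card c.supp)
      (g := fun c => (G.induce c.supp).edgeSet.ncard + 1)
      (s := Finset.univ) (fun c _ => (hVEc c).1)).mp
    have hs : ∑ c : G.ConnectedComponent, Nat.card c.supp
        = ∑ c : G.ConnectedComponent, ((G.induce c.supp).edgeSet.ncard + 1) := by
      rw [Finset.sum_add_distrib, Finset.sum_const, Finset.card_univ, smul_eq_mul, mul_one]
      exact hVEeq
    exact fun c => h hs c (Finset.mem_univ c)
  have hfibpt : ∀ c : G.ConnectedComponent,
      (Finset.univ.filter (fun i => f i = c)).card = 2 := by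
    have h := (Finset.sum_eq_sum_iff_of_le
      (f := fun _ : G.ConnectedComponent => 2)
      (g := fun c => (Finset.univ.filter (fun i => f i = c)).card)
      (s := Finset.univ) (fun c _ => hfib2 c)).mp
    have hs : ∑ _c : G.ConnectedComponent, (2 : ℕ)
        = ∑ c : G.ConnectedComponent, (Finset.univ.filter (fun i => f i = c)).card := by
      rw [← hm_fib, Finset.sum_const, Finset.card_univ, smul_eq_mul]
      omega
    exact fun c => (h hs c (Finset.mem_univ c)).symm
  -- conclusion (a)
  have concA : ∀ e : Sym2 S, (∃ i, e ∈ wordSteps (w i)) →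
      (∑ i, (wordSteps (w i)).count e) = 2 := by
    intro e he
    have heF : e ∈ F := (hmemF e).mpr he
    by_cases hd : e.IsDiag
    · exfalso
      have h0 : (∑ i, (wordSteps (w i)).count e) = 0 :=
        (Finset.sum_eq_zero_iff).mp hD0 e (Finset.mem_filter.mpr ⟨heF, hd⟩)
      have := htwice e he
      omega
    · exact hNpt e (Finset.mem_filter.mpr ⟨heF, hd⟩)
  -- conclusion (b)
  have concB2 : 2 * Nat.card G.ConnectedComponent = m := by
    rw [Nat.card_eq_fintype_card]; exact hCm
  have concB3 : ∀ c : G.ConnectedComponent, (G.induce c.supp).IsTree :=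
    fun c => (hVEc c).2 (hVpt c)
  -- conclusion (c), first part
  have concC1 : ∀ i, ∃! j, j ≠ i ∧ ∃ e, e ∈ wordSteps (w i) ∧ e ∈ wordSteps (w j) := by
    intro i
    obtain ⟨j, hji, e, hei, hej⟩ := hshare i
    refine ⟨j, ⟨hji, e, hei, hej⟩, ?_⟩
    rintro j' ⟨hj'i, e', he'i, he'j'⟩
    have hfj : f j = f i :=
      (hfx j (mem_of_mem_wordSteps hej _ (Sym2.out_fst_mem e))).symm.trans
        (hfx i (mem_of_mem_wordSteps hei _ (Sym2.out_fst_mem e)))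
    have hfj' : f j' = f i :=
      (hfx j' (mem_of_mem_wordSteps he'j' _ (Sym2.out_fst_mem e'))).symm.trans
        (hfx i (mem_of_mem_wordSteps he'i _ (Sym2.out_fst_mem e')))
    have hpair : ({i, j} : Finset (Fin m)) = Finset.univ.filter (fun k => f k = f i) := by
      refine Finset.eq_of_subset_of_card_le ?_ ?_
      · intro k hk
        rcases Finset.mem_insert.mp hk with rfl | hk
        · simp
        · rw [Finset.mem_singleton] at hk; subst hk; simp [hfj]
      · rw [hfibpt (f i), Finset.card_insert_of_notMem (by simp [Ne.symm hji]),
          Finset.card_singleton]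
    have : j' ∈ ({i, j} : Finset (Fin m)) := by
      rw [hpair, Finset.mem_filter]; exact ⟨Finset.mem_univ _, hfj'⟩
    rcases Finset.mem_insert.mp this with rfl | h
    · exact absurd rfl hj'i
    · exact Finset.mem_singleton.mp h
  -- conclusion (c), second part
  have concC2 : ∀ c : G.ConnectedComponent,
      ∃ i j : Fin m, i ≠ j ∧ ∀ k : Fin m,
        ((∀ v : {x : S // x ∈ sentenceSupp w}, (v : S) ∈ w k → v ∈ c.supp)
          ↔ (k = i ∨ k = j)) := by
    intro c
    obtain ⟨i, j, hij, hset⟩ := Finset.card_eq_two.mp (hfibpt c)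
    have hfi : f i = c := by
      have : i ∈ Finset.univ.filter (fun k => f k = c) := by rw [hset]; simp
      exact (Finset.mem_filter.mp this).2
    have hfj : f j = c := by
      have : j ∈ Finset.univ.filter (fun k => f k = c) := by rw [hset]; simp
      exact (Finset.mem_filter.mp this).2
    refine ⟨i, j, hij, fun k => ⟨?_, ?_⟩⟩
    · intro h
      have hk : f k = c := by
        have hmem := h ⟨(w k).head (hwne k), mem_sentenceSupp (List.head_mem (hwne k))⟩
          (List.head_mem (hwne k))
        rw [SimpleGraph.ConnectedComponent.mem_supp_iff] at hmem
        rw [hfdef]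
        exact hmem
      have : k ∈ Finset.univ.filter (fun k => f k = c) :=
        Finset.mem_filter.mpr ⟨Finset.mem_univ _, hk⟩
      rw [hset] at this
      rcases Finset.mem_insert.mp this with rfl | h'
      · exact Or.inl rfl
      · exact Or.inr (Finset.mem_singleton.mp h')
    · intro hk v hv
      have hfk : f k = c := by rcases hk with rfl | rfl <;> assumption
      rw [SimpleGraph.ConnectedComponent.mem_supp_iff]
      exact (hfx k hv).trans hfk
  exact ⟨concA, ⟨⟨Fintype.card G.ConnectedComponent, by omega⟩, concB2, concB3⟩,
    concC1, concC2⟩
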